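/- Let G be a Hausdorff topological group such that every nonempty open subset covers G by countably many left translates. If every homomorphism from a given topological group K into any second-countable Hausdorff topological group is continuous, then every homomorphism from K into G is continuous. -/

import Mathlib

set_option linter.unusedSectionVars false
set_option maxHeartbeats 1000000

open Pointwise Set Filter Topology

universe u

namespace GuranAux

variable {G : Type u} [Group G] [TopologicalSpace G] [IsTopologicalGroup G]

def CoverHyp (G : Type u) [Group G] [TopologicalSpace G] : Prop :=
  ∀ U : Set G, IsOpen U → U.Nonempty → ∃ c : ℕ → G, (⋃ n, c n • U) = Set.univ

open Classical in
noncomputable def Dc (hc : CoverHyp G) (V : Set G) : ℕ → G :=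
  if h : IsOpen V ∧ V.Nonempty then Classical.choose (hc V h.1 h.2) else fun _ => 1

open Classical in
lemma Dc_spec (hc : CoverHyp G) (V : Set G) (hV : IsOpen V) (hne : V.Nonempty) (g : G) :
    ∃ i, g ∈ Dc hc V i • V := by
  rw [Dc, dif_pos ⟨hV, hne⟩]
  have h2 := Classical.choose_spec (hc V hV hne)
  have : g ∈ ⋃ i, Classical.choose (hc V hV hne) i • V := by rw [h2]; trivial
  exact mem_iUnion.mp this

lemma shrink_exists (W : Set G) (hW : IsOpen W) (h1 : (1:G) ∈ W) (F : Set G) (hF : F.Finite) :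
    ∃ V : Set G, IsOpen V ∧ (1:G) ∈ V ∧ V⁻¹ = V ∧
      (∀ x ∈ V, ∀ y ∈ V, ∀ z ∈ V, x * y * z ∈ W) ∧
      ∀ g ∈ F, ∀ x ∈ V, g * x * g⁻¹ ∈ W := by
  have hW1 : W ∈ 𝓝 (1:G) := hW.mem_nhds h1
  obtain ⟨V₁, hV₁o, hV₁1, hV₁⟩ := exists_open_nhds_one_mul_subset hW1
  obtain ⟨V₂, hV₂o, hV₂1, hV₂⟩ := exists_open_nhds_one_mul_subset (hV₁o.mem_nhds hV₁1)
  have hV₂sub : V₂ ⊆ V₁ := by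
    intro z hz
    have := hV₂ (Set.mul_mem_mul hz hV₂1)
    rwa [mul_one] at this
  set C : Set G := ⋂ g ∈ F, (fun x => g * x * g⁻¹) ⁻¹' W with hC
  have hCo : IsOpen C :=
    hF.isOpen_biInter fun g _ => hW.preimage (IsTopologicalGroup.continuous_conj g)
  have hC1 : (1:G) ∈ C := mem_iInter₂.2 fun g _ => by simp [h1]
  set A : Set G := V₂ ∩ C with hA
  have hAo : IsOpen A := hV₂o.inter hCo
  have hA1 : (1:G) ∈ A := ⟨hV₂1, hC1⟩
  refine ⟨A ∩ A⁻¹, hAo.inter hAo.inv, ⟨hA1, by simpa using hA1⟩, ?_, ?_, ?_⟩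
  · rw [Set.inter_inv, inv_inv, Set.inter_comm]
  · intro x hx y hy z hz
    have hxy : x * y ∈ V₁ := hV₂ (Set.mul_mem_mul hx.1.1 hy.1.1)
    exact hV₁ (Set.mul_mem_mul hxy (hV₂sub hz.1.1))
  · intro g hg x hx
    exact mem_iInter₂.1 hx.1.2 g hg

open Classical in
noncomputable def shrinkSet (W : Set G) (F : Set G) : Set G :=
  if h : IsOpen W ∧ (1:G) ∈ W ∧ F.Finite then Classical.choose (shrink_exists W h.1 h.2.1 F h.2.2)
  else univ

lemma shrinkSet_spec (W : Set G) (F : Set G) :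
    IsOpen (shrinkSet W F) ∧ (1:G) ∈ shrinkSet W F ∧ (shrinkSet W F)⁻¹ = shrinkSet W F ∧
    (IsOpen W → (1:G) ∈ W → F.Finite →
      ((∀ x ∈ shrinkSet W F, ∀ y ∈ shrinkSet W F, ∀ z ∈ shrinkSet W F, x * y * z ∈ W) ∧
       (∀ g ∈ F, ∀ x ∈ shrinkSet W F, g * x * g⁻¹ ∈ W))) := by
  rw [shrinkSet]
  by_cases h : IsOpen W ∧ (1:G) ∈ W ∧ F.Finite
  · rw [dif_pos h]
    obtain ⟨h1, h2, h3, h4, h5⟩ := Classical.choose_spec (shrink_exists W h.1 h.2.1 F h.2.2)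
    exact ⟨h1, h2, h3, fun _ _ _ => ⟨h4, h5⟩⟩
  · rw [dif_neg h]
    exact ⟨isOpen_univ, trivial, by simp, fun hW h1 hF => absurd ⟨hW, h1, hF⟩ h⟩

noncomputable def Fpool (hc : CoverHyp G) (n : ℕ) (V : Fin (n+1) → Set G) : Set G :=
  Set.range (fun p : (Fin (n+1) × Fin (n+1)) × Bool =>
    cond p.2 (Dc hc (V p.1.1) p.1.2) (Dc hc (V p.1.1) p.1.2)⁻¹)

lemma Fpool_finite (hc : CoverHyp G) (n : ℕ) (V : Fin (n+1) → Set G) :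
    (Fpool hc n V).Finite := Set.finite_range _

noncomputable def Vseq (hc : CoverHyp G) (U : Set G) : ℕ → Set G
  | 0 => shrinkSet U ∅
  | (n+1) => shrinkSet (Vseq hc U n) (Fpool hc n (fun m : Fin (n+1) => Vseq hc U m))
  decreasing_by
  · exact Nat.lt_succ_self n
  · exact m.isLt

lemma Vseq_zero (hc : CoverHyp G) (U : Set G) : Vseq hc U 0 = shrinkSet U ∅ := by
  rw [Vseq]

lemma Vseq_succ (hc : CoverHyp G) (U : Set G) (n : ℕ) :
    Vseq hc U (n+1) = shrinkSet (Vseq hc U n) (Fpool hc n (fun m : Fin (n+1) => Vseq hc U m)) := by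
  rw [Vseq]

lemma Vseq_isOpen (hc : CoverHyp G) (U : Set G) (n : ℕ) : IsOpen (Vseq hc U n) := by
  cases n with
  | zero => rw [Vseq_zero]; exact (shrinkSet_spec _ _).1
  | succ n => rw [Vseq_succ]; exact (shrinkSet_spec _ _).1

lemma Vseq_one (hc : CoverHyp G) (U : Set G) (n : ℕ) : (1:G) ∈ Vseq hc U n := by
  cases n with
  | zero => rw [Vseq_zero]; exact (shrinkSet_spec _ _).2.1
  | succ n => rw [Vseq_succ]; exact (shrinkSet_spec _ _).2.1

lemma Vseq_inv (hc : CoverHyp G) (U : Set G) (n : ℕ) : (Vseq hc U n)⁻¹ = Vseq hc U n := by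
  cases n with
  | zero => rw [Vseq_zero]; exact (shrinkSet_spec _ _).2.2.1
  | succ n => rw [Vseq_succ]; exact (shrinkSet_spec _ _).2.2.1

lemma Vseq_inv_mem (hc : CoverHyp G) (U : Set G) (n : ℕ) {x : G} (hx : x ∈ Vseq hc U n) :
    x⁻¹ ∈ Vseq hc U n := by
  rw [← Vseq_inv hc U n]; exact Set.inv_mem_inv.2 hx

lemma Vseq_triple (hc : CoverHyp G) (U : Set G) (n : ℕ) :
    ∀ x ∈ Vseq hc U (n+1), ∀ y ∈ Vseq hc U (n+1), ∀ z ∈ Vseq hc U (n+1),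
      x * y * z ∈ Vseq hc U n := by
  rw [Vseq_succ]
  exact ((shrinkSet_spec _ _).2.2.2 (Vseq_isOpen hc U n) (Vseq_one hc U n)
    (Fpool_finite _ _ _)).1

lemma Vseq_zero_subset (hc : CoverHyp G) {U : Set G} (hU : IsOpen U) (h1 : (1:G) ∈ U) :
    Vseq hc U 0 ⊆ U := by
  intro x hx
  rw [Vseq_zero] at hx
  have h := ((shrinkSet_spec U (∅ : Set G)).2.2.2 hU h1 (Set.finite_empty)).1
  have h1' : (1:G) ∈ shrinkSet U (∅ : Set G) := (shrinkSet_spec _ _).2.1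
  have := h x hx 1 h1' 1 h1'
  simpa using this

lemma Vseq_succ_subset (hc : CoverHyp G) (U : Set G) (n : ℕ) :
    Vseq hc U (n+1) ⊆ Vseq hc U n := by
  intro x hx
  have := Vseq_triple hc U n x hx 1 (Vseq_one hc U _) 1 (Vseq_one hc U _)
  simpa using this

lemma Vseq_mono (hc : CoverHyp G) (U : Set G) {m n : ℕ} (h : m ≤ n) :
    Vseq hc U n ⊆ Vseq hc U m := by
  induction n with
  | zero => simp_all
  | succ n ih =>
    rcases Nat.lt_or_ge m (n+1) with h' | h'
    · exact (Vseq_succ_subset hc U n).trans (ih (by omega))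
    · have : m = n + 1 := le_antisymm h h'
      subst this; exact subset_rfl

lemma Vseq_conj (hc : CoverHyp G) (U : Set G) {j i k : ℕ} (hj : j ≤ k) (hi : i ≤ k) :
    ∀ x ∈ Vseq hc U (k+1),
      Dc hc (Vseq hc U j) i * x * (Dc hc (Vseq hc U j) i)⁻¹ ∈ Vseq hc U k ∧
      (Dc hc (Vseq hc U j) i)⁻¹ * x * Dc hc (Vseq hc U j) i ∈ Vseq hc U k := by
  intro x hx
  rw [Vseq_succ] at hx
  have hconj := ((shrinkSet_spec (Vseq hc U k)
      (Fpool hc k (fun m : Fin (k+1) => Vseq hc U m))).2.2.2 (Vseq_isOpen hc U k)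
      (Vseq_one hc U k) (Fpool_finite _ _ _)).2
  have hmem : Dc hc (Vseq hc U j) i ∈ Fpool hc k (fun m : Fin (k+1) => Vseq hc U m) :=
    ⟨((⟨j, by omega⟩, ⟨i, by omega⟩), true), rfl⟩
  have hmem' : (Dc hc (Vseq hc U j) i)⁻¹ ∈ Fpool hc k (fun m : Fin (k+1) => Vseq hc U m) :=
    ⟨((⟨j, by omega⟩, ⟨i, by omega⟩), false), rfl⟩
  refine ⟨hconj _ hmem x hx, ?_⟩
  have := hconj _ hmem' x hx
  rwa [inv_inv] at this

lemma Vseq_key (hc : CoverHyp G) (U : Set G) (g : G) (n : ℕ) :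
    ∃ m, ∀ x ∈ Vseq hc U m, g * x * g⁻¹ ∈ Vseq hc U n := by
  obtain ⟨i, hi⟩ := Dc_spec hc (Vseq hc U (n+1)) (Vseq_isOpen hc U (n+1))
    ⟨1, Vseq_one hc U (n+1)⟩ g⁻¹
  obtain ⟨v, hv, hdv⟩ := hi
  have hdv' : Dc hc (Vseq hc U (n+1)) i * v = g⁻¹ := hdv
  set d := Dc hc (Vseq hc U (n+1)) i with hd
  refine ⟨max i (n+2) + 1, fun x hx => ?_⟩
  set k := max i (n+2) with hk
  have h1 : d⁻¹ * x * d ∈ Vseq hc U k :=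
    (Vseq_conj hc U (show n+1 ≤ k by omega) (show i ≤ k by omega) x hx).2
  have h2 : d⁻¹ * x * d ∈ Vseq hc U (n+1) := Vseq_mono hc U (by omega) h1
  have hg : g = v⁻¹ * d⁻¹ := by
    have h3 : g⁻¹ = d * v := hdv'.symm
    rw [← inv_inv g, h3, mul_inv_rev]
  have hv' : v⁻¹ ∈ Vseq hc U (n+1) := Vseq_inv_mem hc U (n+1) hv
  have heq : g * x * g⁻¹ = v⁻¹ * (d⁻¹ * x * d) * v := by rw [hg]; group
  rw [heq]
  exact Vseq_triple hc U n _ hv' _ h2 _ hv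

noncomputable def NN (hc : CoverHyp G) (U : Set G) : Subgroup G where
  carrier := ⋂ n, Vseq hc U n
  one_mem' := mem_iInter.2 fun n => Vseq_one hc U n
  inv_mem' := by
    intro x hx
    refine mem_iInter.2 fun n => ?_
    exact Vseq_inv_mem hc U n (mem_iInter.1 hx n)
  mul_mem' := by
    intro a b ha hb
    refine mem_iInter.2 fun n => ?_
    have := Vseq_triple hc U n a (mem_iInter.1 ha (n+1)) b (mem_iInter.1 hb (n+1)) 1
      (Vseq_one hc U (n+1))
    simpa using this

lemma mem_NN (hc : CoverHyp G) (U : Set G) {x : G} :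
    x ∈ NN hc U ↔ ∀ n, x ∈ Vseq hc U n := by
  constructor
  · intro h n; exact mem_iInter.1 h n
  · intro h; exact mem_iInter.2 h

lemma NN_normal (hc : CoverHyp G) (U : Set G) : (NN hc U).Normal := by
  constructor
  intro x hx g
  refine (mem_NN hc U).2 fun n => ?_
  obtain ⟨m, hm⟩ := Vseq_key hc U g n
  exact hm x ((mem_NN hc U).1 hx m)


end GuranAux

section Quot

variable {G : Type u} [Group G]

def GuranAux.Q (N : Subgroup G) : Type u := G ⧸ N

instance GuranAux.Q.instGroup (N : Subgroup G) [N.Normal] : Group (GuranAux.Q N) :=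
  QuotientGroup.Quotient.group N

end Quot

open GuranAux

theorem continuous_into_countably_covered_group (K : Type*) [Group K] [TopologicalSpace K]
    (G : Type u) [Group G] [TopologicalSpace G] [IsTopologicalGroup G] [T2Space G]
    (hcover : ∀ U : Set G, IsOpen U → U.Nonempty →
      ∃ c : ℕ → G, (⋃ n, c n • U) = Set.univ)
    (hK : ∀ (H : Type u) [Group H] [TopologicalSpace H] [IsTopologicalGroup H] [T2Space H]
      [SecondCountableTopology H] (φ : K →* H), Continuous φ)
    (π : K →* G) : Continuous π := by
  have hc : GuranAux.CoverHyp G := hcover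
  rw [continuous_def]
  intro O hO
  rw [isOpen_iff_mem_nhds]
  intro k₀ hk₀
  set U : Set G := (fun y => π k₀ * y) ⁻¹' O with hUdef
  have hU : IsOpen U := hO.preimage (continuous_mul_left _)
  have hU1 : (1:G) ∈ U := by
    simp only [hUdef, mem_preimage, mul_one]
    exact hk₀
  set N := GuranAux.NN hc U with hNdef
  haveI hNn : N.Normal := GuranAux.NN_normal hc U
  have hNsub : ∀ n, (N : Set G) ⊆ Vseq hc U n := by
    intro n x hx
    exact (mem_NN hc U).1 hx n
  let q : G →* GuranAux.Q N := QuotientGroup.mk' N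
  have hqsurj : Function.Surjective q := QuotientGroup.mk'_surjective N
  have hqeq : ∀ {a b : G}, q a = q b → a⁻¹ * b ∈ N := by
    intro a b h
    exact QuotientGroup.eq.mp h
  -- the group filter basis on the quotient
  let B : GroupFilterBasis (GuranAux.Q N) :=
  { sets := Set.range (fun n => q '' Vseq hc U n)
    nonempty := ⟨_, ⟨0, rfl⟩⟩
    inter_sets := by
      rintro x y ⟨m, rfl⟩ ⟨n, rfl⟩
      exact ⟨q '' Vseq hc U (max m n), ⟨max m n, rfl⟩, Set.subset_inter
        (Set.image_mono (Vseq_mono hc U (le_max_left m n)))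
        (Set.image_mono (Vseq_mono hc U (le_max_right m n)))⟩
    one' := by
      rintro x ⟨n, rfl⟩
      exact ⟨1, Vseq_one hc U n, map_one q⟩
    mul' := by
      rintro x ⟨n, rfl⟩
      refine ⟨q '' Vseq hc U (n+1), ⟨n+1, rfl⟩, ?_⟩
      rintro z hz
      rw [Set.mem_mul] at hz
      obtain ⟨a, ⟨a', ha', rfl⟩, b, ⟨b', hb', rfl⟩, rfl⟩ := hz
      refine ⟨a' * b', ?_, map_mul q a' b'⟩
      have := Vseq_triple hc U n a' ha' b' hb' 1 (Vseq_one hc U _)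
      simpa using this
    inv' := by
      rintro x ⟨n, rfl⟩
      refine ⟨q '' Vseq hc U n, ⟨n, rfl⟩, ?_⟩
      rintro z ⟨a, ha, rfl⟩
      exact ⟨a⁻¹, Vseq_inv_mem hc U n ha, map_inv q a⟩
    conj' := by
      intro x₀
      rintro x ⟨n, rfl⟩
      obtain ⟨g, rfl⟩ := hqsurj x₀
      obtain ⟨m, hm⟩ := Vseq_key hc U g n
      refine ⟨q '' Vseq hc U m, ⟨m, rfl⟩, ?_⟩
      rintro z ⟨a, ha, rfl⟩
      simp only [Set.mem_preimage]
      exact ⟨g * a * g⁻¹, hm a ha, by rw [map_mul, map_mul, map_inv]⟩ }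
  letI tH : TopologicalSpace (GuranAux.Q N) := B.topology
  haveI htg : IsTopologicalGroup (GuranAux.Q N) := B.isTopologicalGroup
  -- T1 (hence T2 via regularity)
  haveI : T1Space (GuranAux.Q N) := by
    apply IsTopologicalGroup.t1Space
    rw [← isOpen_compl_iff, isOpen_iff_mem_nhds]
    intro x hx
    obtain ⟨g, rfl⟩ := hqsurj x
    have hgN : g ∉ N := by
      intro h
      have h1 : q g = 1 := (QuotientGroup.eq_one_iff g).2 h
      exact hx (by simp [h1])
    obtain ⟨n, hn⟩ : ∃ n, g ∉ Vseq hc U n := by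
      by_contra h
      push_neg at h
      exact hgN ((mem_NN hc U).2 h)
    rw [(B.nhds_hasBasis (q g)).mem_iff]
    refine ⟨q '' Vseq hc U (n+1), ⟨n+1, rfl⟩, ?_⟩
    rintro z ⟨y, ⟨a, ha, rfl⟩, rfl⟩
    simp only [Set.mem_compl_iff, Set.mem_singleton_iff]
    intro heq
    have : g * a ∈ N := by
      apply (QuotientGroup.eq_one_iff (g * a)).1
      rw [← map_mul] at heq
      exact heq
    have hga : g * a ∈ Vseq hc U (n+1) := hNsub (n+1) this
    have hainv : a⁻¹ ∈ Vseq hc U (n+1) := Vseq_inv_mem hc U (n+1) ha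
    have := Vseq_triple hc U n (g*a) hga a⁻¹ hainv 1 (Vseq_one hc U _)
    simp only [mul_one, mul_inv_cancel_right] at this
    exact hn this
  haveI : T2Space (GuranAux.Q N) := by infer_instance
  -- second countable
  have hbasis : TopologicalSpace.IsTopologicalBasis
      (Set.range (fun p : ℕ × ℕ => interior
        ((fun y => q (Dc hc (Vseq hc U (p.2+2)) p.1) * y) '' (q '' Vseq hc U (p.2+1))))) := by
    apply TopologicalSpace.isTopologicalBasis_of_isOpen_of_nhds
    · rintro u ⟨p, rfl⟩
      exact isOpen_interior
    · intro a u hau hu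
      obtain ⟨g, rfl⟩ := hqsurj a
      have hu' : u ∈ 𝓝 (q g) := hu.mem_nhds hau
      rw [(B.nhds_hasBasis (q g)).mem_iff] at hu'
      obtain ⟨w, ⟨n, rfl⟩, hw⟩ := hu'
      obtain ⟨i, hi⟩ := Dc_spec hc (Vseq hc U (n+2)) (Vseq_isOpen hc U (n+2))
        ⟨1, Vseq_one hc U _⟩ g
      obtain ⟨v, hv, hdv⟩ := hi
      have hdv' : Dc hc (Vseq hc U (n+2)) i * v = g := hdv
      refine ⟨_, ⟨(i, n), rfl⟩, ?_, ?_⟩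
      · rw [mem_interior_iff_mem_nhds, (B.nhds_hasBasis (q g)).mem_iff]
        refine ⟨q '' Vseq hc U (n+2), ⟨n+2, rfl⟩, ?_⟩
        rintro z ⟨y, ⟨b, hb, rfl⟩, rfl⟩
        refine ⟨q (v * b), ⟨v * b, ?_, rfl⟩, ?_⟩
        · have := Vseq_triple hc U (n+1) v hv b hb 1 (Vseq_one hc U _)
          simpa using this
        · show q (Dc hc (Vseq hc U (n+2)) i) * q (v*b) = q g * q b
          rw [← map_mul, ← map_mul, ← hdv', mul_assoc]
      · refine subset_trans interior_subset ?_
        rintro z ⟨y, ⟨c, hcmem, rfl⟩, rfl⟩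
        apply hw
        refine ⟨q (v⁻¹ * c), ⟨v⁻¹ * c, ?_, rfl⟩, ?_⟩
        · have hvinv := Vseq_inv_mem hc U (n+2) hv
          have hv2 : v⁻¹ ∈ Vseq hc U (n+1) := Vseq_succ_subset hc U (n+1) hvinv
          have := Vseq_triple hc U n v⁻¹ hv2 c hcmem 1 (Vseq_one hc U _)
          simpa using this
        · show q g * q (v⁻¹ * c) = q (Dc hc (Vseq hc U (n+2)) i) * q c
          rw [← map_mul, ← map_mul, ← hdv']
          congr 1
          group
  haveI : SecondCountableTopology (GuranAux.Q N) :=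
    hbasis.secondCountableTopology (Set.countable_range _)
  -- apply the hypothesis on K
  have hφ : Continuous (q.comp π) := hK _ (q.comp π)
  have hW : (q '' Vseq hc U 1) ∈ 𝓝 (1 : GuranAux.Q N) := B.mem_nhds_one ⟨1, rfl⟩
  have hmap : Continuous (fun k => (q (π k₀))⁻¹ * q (π k)) :=
    continuous_const.mul hφ
  have hS : (fun k => (q (π k₀))⁻¹ * q (π k)) ⁻¹' (q '' Vseq hc U 1) ∈ 𝓝 k₀ := by
    apply hmap.continuousAt.preimage_mem_nhds
    simpa using hW
  refine Filter.mem_of_superset hS ?_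
  intro k hk
  simp only [Set.mem_preimage] at hk ⊢
  obtain ⟨w, hwmem, hweq⟩ := hk
  have hweq' : q w = q ((π k₀)⁻¹ * π k) := by
    rw [hweq, map_mul, map_inv]
  have hn' : w⁻¹ * ((π k₀)⁻¹ * π k) ∈ N := hqeq hweq'
  have hnmem : w⁻¹ * ((π k₀)⁻¹ * π k) ∈ Vseq hc U 1 := hNsub 1 hn'
  have htrip := Vseq_triple hc U 0 w hwmem _ hnmem 1 (Vseq_one hc U _)
  have : (π k₀)⁻¹ * π k ∈ Vseq hc U 0 := by
    have heq : w * (w⁻¹ * ((π k₀)⁻¹ * π k)) * 1 = (π k₀)⁻¹ * π k := by group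
    rwa [heq] at htrip
  have hUU : (π k₀)⁻¹ * π k ∈ U := Vseq_zero_subset hc hU hU1 this
  simpa [hUdef] using hUU
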